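/- arXiv:1307.7445 — 2 statements merged into one kernel-verified Lean document; each statement's English description precedes it below -/
import Mathlib

section
/- In the category of prefix orders and partial history preserving maps, every inverse directed family has a projective limit (i.e., all such projective limits exist). -/
/-- Downward totality: the defining property of a prefix order. -/
def DownTotal {U : Type*} (le : U → U → Prop) : Prop :=
  ∀ a b c : U, le a c → le b c → le a b ∨ le b a

/-- A relation is a prefix order: reflexive, transitive, antisymmetric, downward total. -/
def IsPrefixOrder {U : Type*} (le : U → U → Prop) : Prop :=
  (∀ a, le a a) ∧ (∀ a b c, le a b → le b c → le a c) ∧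
  (∀ a b, le a b → le b a → a = b) ∧ DownTotal le

/-- A partial function has prefix-closed domain. -/
def PrefixClosedDom {U V : Type*} (leU : U → U → Prop) (f : U →. V) : Prop :=
  ∀ u v : U, u ∈ f.Dom → leU v u → v ∈ f.Dom

/-- A partial function is history preserving: f(u⁻) = f(u)⁻ for u in its domain. -/
def HistPres {U V : Type*} (leU : U → U → Prop) (leV : V → V → Prop) (f : U →. V) : Prop :=
  ∀ (u : U) (h : u ∈ f.Dom), f.image {v | leU v u} = {w | leV w (f.fn u h)}

/-- Partial history preserving map with prefix-closed domain. -/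
def IsPHP {U V : Type*} (leU : U → U → Prop) (leV : V → V → Prop) (f : U →. V) : Prop :=
  PrefixClosedDom leU f ∧ HistPres leU leV f

universe u v

variable {I : Type u} [Preorder I] {U : I → Type v} [∀ i, PartialOrder (U i)]

/-- An inverse directed family of partial history preserving maps between prefix orders. -/
def InvDirFam (f : ∀ i j : I, i ≤ j → (U j →. U i)) : Prop :=
  (∀ i : I, f i i le_rfl = PFun.id (U i)) ∧
  (∀ (i j k : I) (hij : i ≤ j) (hjk : j ≤ k),
      f i k (hij.trans hjk) = (f i j hij).comp (f j k hjk)) ∧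
  (∀ (i j : I) (h : i ≤ j), IsPHP (· ≤ ·) (· ≤ ·) (f i j h))

/-- A limit execution of an inverse directed family: a nonempty, compatible,
downward-closed and cofinally extending subset of the disjoint union of the U i. -/
def IsLimitExec (f : ∀ i j : I, i ≤ j → (U j →. U i)) (H : Set (Σ i : I, U i)) : Prop :=
  H.Nonempty ∧
  (∀ (i j : I) (h : i ≤ j) (u : U i) (v : U j),
      Sigma.mk i u ∈ H → Sigma.mk j v ∈ H → u ∈ f i j h v) ∧
  (∀ (i j : I) (h : i ≤ j) (v : U j) (u : U i),
      Sigma.mk j v ∈ H → u ∈ f i j h v → Sigma.mk i u ∈ H) ∧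
  (∀ (i j : I) (h : i ≤ j) (u : U i), Sigma.mk i u ∈ H → ∃ v : U j, Sigma.mk j v ∈ H)

/-- The order ⊑ on limit executions: componentwise comparison wherever both are defined. -/
def SqLe (H K : Set (Σ i : I, U i)) : Prop :=
  ∀ (i : I) (u v : U i), Sigma.mk i u ∈ H → Sigma.mk i v ∈ K → u ≤ v

/-- The projection π i, sending a limit execution to its unique element in U i, if any. -/
noncomputable def proj (f : ∀ i j : I, i ≤ j → (U j →. U i)) (i : I) :
    {H : Set (Σ i : I, U i) // IsLimitExec f H} →. U i :=
  fun H => ⟨∃ u : U i, Sigma.mk i u ∈ H.1, fun h => h.choose⟩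

-- ### auxiliary lemmas

/-- history preserving maps are monotone on their domain -/
theorem php_mono {A B : Type*} {leA : A → A → Prop} {leB : B → B → Prop} {g : A →. B}
    (hg : HistPres leA leB g) {a b : A} (ha : a ∈ g.Dom) (hb : b ∈ g.Dom)
    (hab : leA a b) : leB (g.fn a ha) (g.fn b hb) := by
  have h1 : g.fn a ha ∈ g.image {v | leA v b} :=
    (PFun.mem_image (f := g) (g.fn a ha) {v | leA v b}).2
      ⟨a, hab, by rw [PFun.fn_apply]; exact Part.get_mem ha⟩
  rw [hg b hb] at h1
  exact h1

theorem pfun_mem_comp_iff {A B C : Type*} (g : B →. C) (h : A →. B) (a : A) (c : C) :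
    c ∈ g.comp h a ↔ ∃ b ∈ h a, c ∈ g b :=
  Part.mem_bind_iff

section Fam

variable {f : ∀ i j : I, i ≤ j → (U j →. U i)}
variable (hdir : ∀ i j : I, ∃ k, i ≤ k ∧ j ≤ k) (hf : InvDirFam f)

include hf in
theorem le_uniq {H : Set (Σ i : I, U i)} (hH : IsLimitExec f H) {i : I} {u v : U i}
    (hu : Sigma.mk i u ∈ H) (hv : Sigma.mk i v ∈ H) : u = v := by
  have h := hH.2.1 i i le_rfl u v hu hv
  rw [hf.1 i, PFun.id_apply, Part.mem_some_iff] at h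
  exact h

include hf in
theorem sqle_refl {H : Set (Σ i : I, U i)} (hH : IsLimitExec f H) : SqLe H H := by
  intro i u v hu hv
  rw [le_uniq hf hH hu hv]

include hdir hf in
/-- if `A ⊑ B` then `A` is defined wherever `B` is -/
theorem sqle_dom {A B : Set (Σ i : I, U i)} (hA : IsLimitExec f A) (hB : IsLimitExec f B)
    (hAB : SqLe A B) {n : I} {u : U n} (hn : Sigma.mk n u ∈ B) :
    ∃ y : U n, Sigma.mk n y ∈ A := by
  obtain ⟨⟨j₀, y₀⟩, hy₀⟩ := hA.1
  obtain ⟨k, hnk, hjk⟩ := hdir n j₀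
  obtain ⟨v', hv'⟩ := hA.2.2.2 j₀ k hjk y₀ hy₀
  obtain ⟨u', hu'⟩ := hB.2.2.2 n k hnk u hn
  have hcomp : u ∈ f n k hnk u' := hB.2.1 n k hnk u u' hn hu'
  have hdomu : u' ∈ (f n k hnk).Dom := (PFun.mem_dom _ _).2 ⟨u, hcomp⟩
  have hle : v' ≤ u' := hAB k v' u' hv' hu'
  have hdomv : v' ∈ (f n k hnk).Dom := (hf.2.2 n k hnk).1 u' v' hdomu hle
  refine ⟨(f n k hnk).fn v' hdomv, hA.2.2.1 n k hnk v' _ hv' ?_⟩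
  rw [PFun.fn_apply]; exact Part.get_mem hdomv

include hdir hf in
theorem sqle_trans {A B C : Set (Σ i : I, U i)} (hA : IsLimitExec f A)
    (hB : IsLimitExec f B) (hC : IsLimitExec f C)
    (h1 : SqLe A B) (h2 : SqLe B C) : SqLe A C := by
  intro i u v hu hv
  obtain ⟨⟨j₀, y₀⟩, hy₀⟩ := hB.1
  obtain ⟨k, hik, hjk⟩ := hdir i j₀
  obtain ⟨a, ha⟩ := hA.2.2.2 i k hik u hu
  obtain ⟨b, hb⟩ := hB.2.2.2 j₀ k hjk y₀ hy₀
  obtain ⟨c, hc⟩ := hC.2.2.2 i k hik v hv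
  have hac : a ≤ c := le_trans (h1 k a b ha hb) (h2 k b c hb hc)
  have hua : u ∈ f i k hik a := hA.2.1 i k hik u a hu ha
  have hvc : v ∈ f i k hik c := hC.2.1 i k hik v c hv hc
  have hda : a ∈ (f i k hik).Dom := (PFun.mem_dom _ _).2 ⟨u, hua⟩
  have hdc : c ∈ (f i k hik).Dom := (PFun.mem_dom _ _).2 ⟨v, hvc⟩
  have hmono := php_mono (hf.2.2 i k hik).2 hda hdc hac
  have eu : (f i k hik).fn a hda = u :=
    Part.mem_unique (by rw [PFun.fn_apply]; exact Part.get_mem hda) hua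
  have ev : (f i k hik).fn c hdc = v :=
    Part.mem_unique (by rw [PFun.fn_apply]; exact Part.get_mem hdc) hvc
  rw [eu, ev] at hmono
  exact hmono

include hdir in
theorem sqle_antisymm {A B : Set (Σ i : I, U i)} (hA : IsLimitExec f A)
    (hB : IsLimitExec f B) (h1 : SqLe A B) (h2 : SqLe B A) : A = B := by
  have key : ∀ (A B : Set (Σ i : I, U i)), IsLimitExec f A → IsLimitExec f B →
      SqLe A B → SqLe B A → A ⊆ B := by
    intro A B hA hB h1 h2 ⟨i, u⟩ hu
    obtain ⟨⟨j₀, y₀⟩, hy₀⟩ := hB.1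
    obtain ⟨k, hik, hjk⟩ := hdir i j₀
    obtain ⟨a, ha⟩ := hA.2.2.2 i k hik u hu
    obtain ⟨b, hb⟩ := hB.2.2.2 j₀ k hjk y₀ hy₀
    have hab : a = b := le_antisymm (h1 k a b ha hb) (h2 k b a hb ha)
    have hua : u ∈ f i k hik a := hA.2.1 i k hik u a hu ha
    exact hB.2.2.1 i k hik b u hb (hab ▸ hua)
  exact Set.Subset.antisymm (key A B hA hB h1 h2) (key B A hB hA h2 h1)


/-- A history chain: a chain of limit executions with a maximum, which is
"full": every prefix of a value of a member is attained by a smaller member. -/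
def HC (f : ∀ i j : I, i ≤ j → (U j →. U i)) (C : Set (Set (Σ i : I, U i))) : Prop :=
  (∀ G ∈ C, IsLimitExec f G) ∧
  (∃ M ∈ C, ∀ G ∈ C, SqLe G M) ∧
  (∀ G ∈ C, ∀ G' ∈ C, SqLe G G' ∨ SqLe G' G) ∧
  (∀ G ∈ C, ∀ (i : I) (u w : U i), Sigma.mk i u ∈ G → w ≤ u →
      ∃ G' ∈ C, SqLe G' G ∧ Sigma.mk i w ∈ G')

/-- restriction of a chain to the prefixes of a member -/
def Res (C : Set (Set (Σ i : I, U i))) (G : Set (Σ i : I, U i)) :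
    Set (Set (Σ i : I, U i)) := {G' ∈ C | SqLe G' G}

noncomputable def maxG {C : Set (Set (Σ i : I, U i))} (h : HC f C) :
    Set (Σ i : I, U i) := h.2.1.choose

theorem maxG_mem {C : Set (Set (Σ i : I, U i))} (h : HC f C) : maxG h ∈ C :=
  h.2.1.choose_spec.1

theorem maxG_max {C : Set (Set (Σ i : I, U i))} (h : HC f C) :
    ∀ G ∈ C, SqLe G (maxG h) := h.2.1.choose_spec.2

theorem maxG_le {C : Set (Set (Σ i : I, U i))} (h : HC f C) :
    IsLimitExec f (maxG h) := h.1 _ (maxG_mem h)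

include hdir hf in
theorem maxG_unique {C : Set (Set (Σ i : I, U i))} (h : HC f C)
    {M : Set (Σ i : I, U i)} (hM : M ∈ C) (hmax : ∀ G ∈ C, SqLe G M) : maxG h = M :=
  sqle_antisymm hdir (maxG_le h) (h.1 _ hM) (hmax _ (maxG_mem h)) (maxG_max h _ hM)

include hdir hf in
theorem HC_res {C : Set (Set (Σ i : I, U i))} (h : HC f C)
    {G : Set (Σ i : I, U i)} (hG : G ∈ C) : HC f (Res C G) := by
  refine ⟨fun G' hG' => h.1 _ hG'.1, ⟨G, ⟨hG, sqle_refl hf (h.1 _ hG)⟩, fun G' hG' => hG'.2⟩,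
    fun G' hG' G'' hG'' => h.2.2.1 _ hG'.1 _ hG''.1, ?_⟩
  intro G' hG' i u w hu hw
  obtain ⟨G'', hG'', hle, hmem⟩ := h.2.2.2 G' hG'.1 i u w hu hw
  exact ⟨G'', ⟨hG'', sqle_trans hdir hf (h.1 _ hG'') (h.1 _ hG'.1) (h.1 _ hG) hle hG'.2⟩,
    hle, hmem⟩

/-- The order on history chains: being an initial segment cut at a member. -/
def LeHC (C C' : Set (Set (Σ i : I, U i))) : Prop :=
  ∃ G ∈ C', C = Res C' G

include hdir hf in
theorem leHC_norm {C C' : Set (Set (Σ i : I, U i))} (h : HC f C) (h' : HC f C')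
    (hle : LeHC C C') : maxG h ∈ C' ∧ C = Res C' (maxG h) := by
  obtain ⟨G, hG, hres⟩ := hle
  have hGC : G ∈ C := by rw [hres]; exact ⟨hG, sqle_refl hf (h'.1 _ hG)⟩
  have : maxG h = G := by
    refine maxG_unique hdir hf h hGC (fun G' hG' => ?_)
    rw [hres] at hG'; exact hG'.2
  rw [this]; exact ⟨hG, hres⟩

include hf in
theorem leHC_refl {C : Set (Set (Σ i : I, U i))} (h : HC f C) : LeHC C C := by
  refine ⟨maxG h, maxG_mem h, Set.ext fun G => ?_⟩
  exact ⟨fun hG => ⟨hG, maxG_max h _ hG⟩, fun hG => hG.1⟩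

include hdir hf in
theorem res_res {C : Set (Set (Σ i : I, U i))} (h : HC f C)
    {G₁ G₂ : Set (Σ i : I, U i)} (hG₁ : G₁ ∈ C) (hG₂ : G₂ ∈ C) (h12 : SqLe G₁ G₂) :
    Res (Res C G₂) G₁ = Res C G₁ := by
  ext G
  constructor
  · rintro ⟨⟨hGC, _⟩, hle⟩; exact ⟨hGC, hle⟩
  · rintro ⟨hGC, hle⟩
    exact ⟨⟨hGC, sqle_trans hdir hf (h.1 _ hGC) (h.1 _ hG₁) (h.1 _ hG₂) hle h12⟩, hle⟩

include hdir hf in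
theorem leHC_trans {C C' C'' : Set (Set (Σ i : I, U i))} (h : HC f C) (h' : HC f C')
    (h'' : HC f C'') (h1 : LeHC C C') (h2 : LeHC C' C'') : LeHC C C'' := by
  obtain ⟨G₁, hG₁, e₁⟩ := h1
  obtain ⟨G₂, hG₂, e₂⟩ := h2
  rw [e₂] at hG₁
  refine ⟨G₁, hG₁.1, ?_⟩
  rw [e₁, e₂, res_res hdir hf h'' hG₁.1 hG₂ hG₁.2]

include hdir hf in
theorem leHC_antisymm {C C' : Set (Set (Σ i : I, U i))} (h : HC f C) (h' : HC f C')
    (h1 : LeHC C C') (h2 : LeHC C' C) : C = C' := by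
  obtain ⟨hM, e₁⟩ := leHC_norm hdir hf h h' h1
  obtain ⟨hM', e₂⟩ := leHC_norm hdir hf h' h h2
  set M := maxG h with hMdef
  set M' := maxG h' with hM'def
  have hMC : M ∈ C := by rw [e₂] at hM; exact hM.1
  have hMM' : SqLe M M' := by rw [e₂] at hM; exact hM.2
  have hM'M : SqLe M' M := by rw [e₁] at hM'; exact hM'.2
  have : M = M' := sqle_antisymm hdir (h.1 _ hMC) (h'.1 _ (by rw [e₁] at hM'; exact hM'.1))
    hMM' hM'M
  rw [e₁, e₂, this]
  ext G
  exact ⟨fun hG => hG.1, fun hG => ⟨⟨hG.1, hG.2⟩, hG.2⟩⟩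

include hdir hf in
theorem leHC_downtotal {C₁ C₂ C₃ : Set (Set (Σ i : I, U i))} (h1 : HC f C₁) (h2 : HC f C₂)
    (h3 : HC f C₃) (ha : LeHC C₁ C₃) (hb : LeHC C₂ C₃) : LeHC C₁ C₂ ∨ LeHC C₂ C₁ := by
  obtain ⟨hM₁, e₁⟩ := leHC_norm hdir hf h1 h3 ha
  obtain ⟨hM₂, e₂⟩ := leHC_norm hdir hf h2 h3 hb
  set M₁ := maxG h1 with hM₁def
  set M₂ := maxG h2 with hM₂def
  rcases h3.2.2.1 _ hM₁ _ hM₂ with hle | hle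
  · left
    refine ⟨M₁, by rw [e₂]; exact ⟨hM₁, hle⟩, ?_⟩
    rw [e₁, e₂, res_res hdir hf h3 hM₁ hM₂ hle]
  · right
    refine ⟨M₂, by rw [e₁]; exact ⟨hM₂, hle⟩, ?_⟩
    rw [e₂, e₁, res_res hdir hf h3 hM₂ hM₁ hle]

variable (f) in
/-- the projections out of the limit -/
noncomputable def piL (i : I) : {C : Set (Set (Σ i : I, U i)) // HC f C} →. U i :=
  fun C => ⟨∃ u : U i, Sigma.mk i u ∈ maxG C.2, fun h => h.choose⟩

include hf in
theorem mem_piL {i : I} {C : {C : Set (Set (Σ i : I, U i)) // HC f C}} {u : U i} :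
    u ∈ piL f i C ↔ Sigma.mk i u ∈ maxG C.2 := by
  constructor
  · rintro ⟨h, rfl⟩
    exact h.choose_spec
  · intro hu
    have hd : ∃ u' : U i, Sigma.mk i u' ∈ maxG C.2 := ⟨u, hu⟩
    exact ⟨hd, le_uniq hf (maxG_le C.2) hd.choose_spec hu⟩

include hdir hf in
theorem piL_pcd (i : I) :
    PrefixClosedDom (fun C C' : {C : Set (Set (Σ i : I, U i)) // HC f C} =>
      LeHC C.1 C'.1) (piL f i) := by
  intro C C' hC hle
  obtain ⟨hmem, _⟩ := leHC_norm hdir hf C'.2 C.2 hle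
  obtain ⟨u, hu⟩ := hC
  obtain ⟨y, hy⟩ := sqle_dom hdir hf (maxG_le C'.2) (maxG_le C.2)
    (maxG_max C.2 _ hmem) hu
  exact ⟨y, hy⟩

include hdir hf in
theorem piL_hist (i : I) :
    HistPres (fun C C' : {C : Set (Set (Σ i : I, U i)) // HC f C} => LeHC C.1 C'.1)
      (· ≤ ·) (piL f i) := by
  intro C hC
  have hfn : Sigma.mk i ((piL f i).fn C hC) ∈ maxG C.2 :=
    (mem_piL hf).1 (by rw [PFun.fn_apply]; exact Part.get_mem hC)
  ext w
  simp only [PFun.mem_image, Set.mem_setOf_eq]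
  constructor
  · rintro ⟨C', hle, hw⟩
    have hw' : Sigma.mk i w ∈ maxG C'.2 := (mem_piL hf).1 hw
    obtain ⟨hmem, _⟩ := leHC_norm hdir hf C'.2 C.2 hle
    exact maxG_max C.2 _ hmem i w _ hw' hfn
  · intro hw
    obtain ⟨G', hG', hle, hmem⟩ :=
      C.2.2.2.2 (maxG C.2) (maxG_mem C.2) i _ w hfn hw
    refine ⟨⟨Res C.1 G', HC_res hdir hf C.2 hG'⟩, ⟨G', hG', rfl⟩, ?_⟩
    have hmax : maxG (HC_res hdir hf C.2 hG') = G' :=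
      maxG_unique hdir hf _ ⟨hG', sqle_refl hf (C.2.1 _ hG')⟩ (fun G hG => hG.2)
    exact (mem_piL hf).2 (by rw [hmax]; exact hmem)

include hdir hf in
theorem piL_comp (i j : I) (hij : i ≤ j) : piL f i = (f i j hij).comp (piL f j) := by
  apply PFun.ext
  intro C u
  rw [pfun_mem_comp_iff]
  constructor
  · intro hu
    have hu' : Sigma.mk i u ∈ maxG C.2 := (mem_piL hf).1 hu
    obtain ⟨v, hv⟩ := (maxG_le C.2).2.2.2 i j hij u hu'
    exact ⟨v, (mem_piL hf).2 hv, (maxG_le C.2).2.1 i j hij u v hu' hv⟩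
  · rintro ⟨v, hv, huv⟩
    have hv' : Sigma.mk j v ∈ maxG C.2 := (mem_piL hf).1 hv
    exact (mem_piL hf).2 ((maxG_le C.2).2.2.1 i j hij v u hv' huv)

section UP

variable {W : Type*} {leW : W → W → Prop} {ρ : ∀ i : I, W →. U i}

/-- the graph of the values of a compatible family at a point -/
def Tset (ρ : ∀ i : I, W →. U i) (w : W) : Set (Σ i : I, U i) := {p | p.2 ∈ ρ p.1 w}

/-- the history chain associated to a point of a compatible family -/
def Cset (leW : W → W → Prop) (ρ : ∀ i : I, W →. U i) (w : W) :
    Set (Set (Σ i : I, U i)) :=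
  {G | ∃ v, leW v w ∧ (∃ i, (ρ i v).Dom) ∧ G = Tset ρ v}

theorem mem_Tset {i : I} {u : U i} {w : W} : Sigma.mk i u ∈ Tset ρ w ↔ u ∈ ρ i w :=
  Iff.rfl

variable (hρc : ∀ (i j : I) (h : i ≤ j), ρ i = (f i j h).comp (ρ j))
variable (hρ : ∀ i : I, IsPHP leW (· ≤ ·) (ρ i))
variable (hW : IsPrefixOrder leW)

include hρc in
theorem Tset_le {w : W} (hw : ∃ i, (ρ i w).Dom) : IsLimitExec f (Tset ρ w) := by
  refine ⟨?_, ?_, ?_, ?_⟩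
  · obtain ⟨i, hd⟩ := hw
    exact ⟨⟨i, (ρ i w).get hd⟩, Part.get_mem hd⟩
  · intro i j h u v hu hv
    rw [mem_Tset, hρc i j h, pfun_mem_comp_iff] at hu
    obtain ⟨v', hv', huv'⟩ := hu
    rwa [Part.mem_unique hv' hv] at huv'
  · intro i j h v u hv huv
    rw [mem_Tset, hρc i j h, pfun_mem_comp_iff]
    exact ⟨v, hv, huv⟩
  · intro i j h u hu
    rw [mem_Tset, hρc i j h, pfun_mem_comp_iff] at hu
    obtain ⟨v', hv', _⟩ := hu
    exact ⟨v', hv'⟩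

include hρ in
theorem Tset_mono {v w : W} (hvw : leW v w) : SqLe (Tset ρ v) (Tset ρ w) := by
  intro i a b ha hb
  replace ha : a ∈ ρ i v := ha
  replace hb : b ∈ ρ i w := hb
  have hdv : v ∈ (ρ i).Dom := (PFun.mem_dom _ _).2 ⟨a, ha⟩
  have hdw : w ∈ (ρ i).Dom := (PFun.mem_dom _ _).2 ⟨b, hb⟩
  have hm := php_mono (hρ i).2 hdv hdw hvw
  have ea : (ρ i).fn v hdv = a :=
    Part.mem_unique (by rw [PFun.fn_apply]; exact Part.get_mem hdv) ha
  have eb : (ρ i).fn w hdw = b :=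
    Part.mem_unique (by rw [PFun.fn_apply]; exact Part.get_mem hdw) hb
  rwa [ea, eb] at hm

include hρc hρ hW in
theorem Cset_HC {w : W} (hw : ∃ i, (ρ i w).Dom) : HC f (Cset leW ρ w) := by
  refine ⟨?_, ?_, ?_, ?_⟩
  · rintro G ⟨v, _, hvd, rfl⟩
    exact Tset_le hρc hvd
  · exact ⟨Tset ρ w, ⟨w, hW.1 w, hw, rfl⟩, by
      rintro G ⟨v, hvw, _, rfl⟩; exact Tset_mono hρ hvw⟩
  · rintro G ⟨v, hvw, _, rfl⟩ G' ⟨v', hv'w, _, rfl⟩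
    rcases hW.2.2.2 v v' w hvw hv'w with h | h
    · exact Or.inl (Tset_mono hρ h)
    · exact Or.inr (Tset_mono hρ h)
  · rintro G ⟨v, hvw, _, rfl⟩ i u w' hu hw'
    replace hu : u ∈ ρ i v := hu
    have hdv : v ∈ (ρ i).Dom := (PFun.mem_dom _ _).2 ⟨u, hu⟩
    have himg := (hρ i).2 v hdv
    have hfn : (ρ i).fn v hdv = u :=
      Part.mem_unique (by rw [PFun.fn_apply]; exact Part.get_mem hdv) hu
    have : w' ∈ (ρ i).image {a | leW a v} := by
      rw [himg, hfn]; exact hw'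
    obtain ⟨a, hav, hw'a⟩ := (PFun.mem_image (f := ρ i) w' {a | leW a v}).1 this
    refine ⟨Tset ρ a, ⟨a, hW.2.1 a v w hav hvw, ⟨i, (PFun.mem_dom _ _).2 ⟨w', hw'a⟩⟩, rfl⟩,
      Tset_mono hρ hav, hw'a⟩

include hdir hf hρc hρ hW in
theorem Cset_res {v w : W} (hvw : leW v w) (hvd : ∃ i, (ρ i v).Dom) :
    Cset leW ρ v = Res (Cset leW ρ w) (Tset ρ v) := by
  ext G
  constructor
  · rintro ⟨a, hav, had, rfl⟩
    exact ⟨⟨a, hW.2.1 a v w hav hvw, had, rfl⟩, Tset_mono hρ hav⟩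
  · rintro ⟨⟨a, haw, had, rfl⟩, hle⟩
    rcases hW.2.2.2 a v w haw hvw with h | h
    · exact ⟨a, h, had, rfl⟩
    · have : Tset ρ a = Tset ρ v :=
        sqle_antisymm hdir (Tset_le hρc had) (Tset_le hρc hvd) hle (Tset_mono hρ h)
      exact this ▸ ⟨v, hW.1 v, hvd, rfl⟩

include hdir hf hρc hρ hW in
theorem Cset_max {w : W} (hw : ∃ i, (ρ i w).Dom) :
    maxG (Cset_HC hρc hρ hW hw) = Tset ρ w :=
  maxG_unique hdir hf _ ⟨w, hW.1 w, hw, rfl⟩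
    (by rintro G ⟨v, hvw, _, rfl⟩; exact Tset_mono hρ hvw)

/-- the mediating morphism -/
noncomputable def mFun (hρc : ∀ (i j : I) (h : i ≤ j), ρ i = (f i j h).comp (ρ j))
    (hρ : ∀ i : I, IsPHP leW (· ≤ ·) (ρ i)) (hW : IsPrefixOrder leW) :
    W →. {C : Set (Set (Σ i : I, U i)) // HC f C} :=
  fun w => ⟨∃ i, (ρ i w).Dom, fun h => ⟨Cset leW ρ w, Cset_HC hρc hρ hW h⟩⟩

theorem mem_mFun {w : W} {ℓ : {C : Set (Set (Σ i : I, U i)) // HC f C}} :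
    ℓ ∈ mFun hρc hρ hW w ↔ (∃ i, (ρ i w).Dom) ∧ ℓ.1 = Cset leW ρ w := by
  constructor
  · rintro ⟨h, rfl⟩
    exact ⟨h, rfl⟩
  · rintro ⟨h, he⟩
    exact ⟨h, (Subtype.ext he).symm⟩

include hdir hf hρc hρ hW in
theorem maxG_eq_of_eq_Cset {ℓ : {C : Set (Set (Σ i : I, U i)) // HC f C}} {w : W}
    (he : ℓ.1 = Cset leW ρ w) (hd : ∃ i, (ρ i w).Dom) : maxG ℓ.2 = Tset ρ w := by
  refine maxG_unique hdir hf ℓ.2 (he ▸ ⟨w, hW.1 w, hd, rfl⟩) (fun G hG => ?_)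
  rw [he] at hG
  obtain ⟨v, hvw, _, rfl⟩ := hG
  exact Tset_mono hρ hvw

include hdir hf hρc hρ hW in
theorem mFun_php :
    IsPHP leW (fun C C' : {C : Set (Set (Σ i : I, U i)) // HC f C} => LeHC C.1 C'.1)
      (mFun hρc hρ hW) := by
  constructor
  · intro w v hw hvw
    obtain ⟨i, hd⟩ := hw
    exact ⟨i, (hρ i).1 w v hd hvw⟩
  · intro w hw
    ext ℓ
    simp only [PFun.mem_image, Set.mem_setOf_eq]
    have hCw : HC f (Cset leW ρ w) := Cset_HC hρc hρ hW hw
    constructor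
    · rintro ⟨v, hvw, hv⟩
      obtain ⟨hd, he⟩ := (mem_mFun hρc hρ hW).1 hv
      show LeHC ℓ.1 (Cset leW ρ w)
      exact ⟨Tset ρ v, ⟨v, hvw, hd, rfl⟩,
        by rw [he, Cset_res hdir hf hρc hρ hW hvw hd]⟩
    · intro hle
      have hle' : LeHC ℓ.1 (Cset leW ρ w) := hle
      obtain ⟨hmem, hres⟩ := leHC_norm hdir hf ℓ.2 hCw hle'
      obtain ⟨v, hvw, hvd, hT⟩ := hmem
      refine ⟨v, hvw, (mem_mFun hρc hρ hW).2 ⟨hvd, ?_⟩⟩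
      rw [hres, hT, ← Cset_res hdir hf hρc hρ hW hvw hvd]

include hdir hf hρc hρ hW in
theorem mFun_comp (i : I) : ρ i = (piL f i).comp (mFun hρc hρ hW) := by
  apply PFun.ext
  intro w u
  rw [pfun_mem_comp_iff]
  constructor
  · intro hu
    have hd : ∃ i', (ρ i' w).Dom := ⟨i, (PFun.mem_dom _ _).2 ⟨u, hu⟩⟩
    refine ⟨⟨Cset leW ρ w, Cset_HC hρc hρ hW hd⟩, ⟨hd, rfl⟩, ?_⟩
    refine (mem_piL hf).2 ?_
    rw [maxG_eq_of_eq_Cset hdir hf hρc hρ hW rfl hd]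
    exact hu
  · rintro ⟨ℓ, hℓ, hu⟩
    obtain ⟨hd, he⟩ := (mem_mFun hρc hρ hW).1 hℓ
    have := (mem_piL hf).1 hu
    rwa [maxG_eq_of_eq_Cset hdir hf hρc hρ hW he hd] at this

include hdir hf hρc hρ hW in
theorem mFun_unique (m' : W →. {C : Set (Set (Σ i : I, U i)) // HC f C})
    (hm' : IsPHP leW (fun C C' : {C : Set (Set (Σ i : I, U i)) // HC f C} =>
      LeHC C.1 C'.1) m')
    (hc' : ∀ i : I, ρ i = (piL f i).comp m') : m' = mFun hρc hρ hW := by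
  have stepA : ∀ (w : W) (ℓ : {C : Set (Set (Σ i : I, U i)) // HC f C}),
      ℓ ∈ m' w → maxG ℓ.2 = Tset ρ w := by
    intro w ℓ hℓ
    apply Set.ext
    rintro ⟨i, u⟩
    constructor
    · intro hu
      have h1 : u ∈ (piL f i).comp m' w := by
        rw [pfun_mem_comp_iff]
        exact ⟨ℓ, hℓ, (mem_piL hf).2 hu⟩
      rw [← hc' i] at h1
      exact h1
    · intro hu
      have hu' : u ∈ ρ i w := hu
      rw [hc' i, pfun_mem_comp_iff] at hu'
      obtain ⟨ℓ', hℓ', hu''⟩ := hu'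
      rw [Part.mem_unique hℓ' hℓ] at hu''
      exact (mem_piL hf).1 hu''
  have stepB : ∀ (w : W) (ℓ : {C : Set (Set (Σ i : I, U i)) // HC f C}),
      ℓ ∈ m' w → ∃ i, (ρ i w).Dom := by
    intro w ℓ hℓ
    obtain ⟨⟨i, u⟩, hu⟩ := (maxG_le ℓ.2).1
    rw [stepA w ℓ hℓ] at hu
    exact ⟨i, (PFun.mem_dom _ _).2 ⟨u, hu⟩⟩
  have stepC : ∀ (w : W) (ℓ : {C : Set (Set (Σ i : I, U i)) // HC f C}),
      ℓ ∈ m' w → ℓ.1 = Cset leW ρ w := by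
    intro w ℓ hℓ
    have hd' : w ∈ m'.Dom := (PFun.mem_dom _ _).2 ⟨ℓ, hℓ⟩
    have hfn : m'.fn w hd' = ℓ :=
      Part.mem_unique (by rw [PFun.fn_apply]; exact Part.get_mem hd') hℓ
    have hist := hm'.2 w hd'
    ext G
    constructor
    · intro hG
      have hres : HC f (Res ℓ.1 G) := HC_res hdir hf ℓ.2 hG
      have hmem : (⟨Res ℓ.1 G, hres⟩ : {C : Set (Set (Σ i : I, U i)) // HC f C})
          ∈ m'.image {v | leW v w} := by
        rw [hist]
        show LeHC (Res ℓ.1 G) (m'.fn w hd').1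
        rw [hfn]
        exact ⟨G, hG, rfl⟩
      obtain ⟨v, hvw, hv⟩ := (PFun.mem_image (f := m') _ _).1 hmem
      have h1 : maxG hres = G :=
        maxG_unique hdir hf hres ⟨hG, sqle_refl hf (ℓ.2.1 _ hG)⟩ (fun G' hG' => hG'.2)
      have h2 : maxG hres = Tset ρ v := stepA v _ hv
      exact ⟨v, hvw, stepB v _ hv, by rw [← h1, h2]⟩
    · rintro ⟨v, hvw, ⟨i0, hd0⟩, rfl⟩
      rw [hc' i0, PFun.comp_apply] at hd0
      obtain ⟨u, hu⟩ := Part.dom_iff_mem.1 hd0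
      replace hu := Part.mem_bind_iff.1 hu
      obtain ⟨ℓ'', hℓ'', _⟩ := hu
      have himg : ℓ'' ∈ m'.image {v' | leW v' w} :=
        (PFun.mem_image (f := m') _ _).2 ⟨v, hvw, hℓ''⟩
      rw [hist] at himg
      have hle : LeHC ℓ''.1 ℓ.1 := by
        have : LeHC ℓ''.1 (m'.fn w hd').1 := himg
        rwa [hfn] at this
      obtain ⟨hmem, _⟩ := leHC_norm hdir hf ℓ''.2 ℓ.2 hle
      rwa [stepA v ℓ'' hℓ''] at hmem
  apply PFun.ext
  intro w ℓ
  constructor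
  · intro hℓ
    exact (mem_mFun hρc hρ hW).2 ⟨stepB w ℓ hℓ, stepC w ℓ hℓ⟩
  · intro hℓ
    obtain ⟨hd, he⟩ := (mem_mFun hρc hρ hW).1 hℓ
    obtain ⟨i0, hd0⟩ := hd
    rw [hc' i0, PFun.comp_apply] at hd0
    obtain ⟨u, hu⟩ := Part.dom_iff_mem.1 hd0
    replace hu := Part.mem_bind_iff.1 hu
    obtain ⟨ℓ', hℓ', _⟩ := hu
    have : ℓ' = ℓ := Subtype.ext (by rw [stepC w ℓ' hℓ', he])
    rwa [this] at hℓ'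

end UP

end Fam

/-- in the category of prefix orders and partial history preserving maps,
every inverse directed family has a projective limit. -/
theorem stmt9 (hdir : ∀ i j : I, ∃ k, i ≤ k ∧ j ≤ k)
    (f : ∀ i j : I, i ≤ j → (U j →. U i)) (hf : InvDirFam f) :
    ∃ (L : Type (max u v)) (leL : L → L → Prop), IsPrefixOrder leL ∧
      ∃ π : ∀ i : I, L →. U i,
        (∀ i : I, IsPHP leL (· ≤ ·) (π i)) ∧
        (∀ (i j : I) (h : i ≤ j), π i = (f i j h).comp (π j)) ∧
        (∀ (W : Type (max u v)) (leW : W → W → Prop), IsPrefixOrder leW →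
          ∀ ρ : ∀ i : I, W →. U i,
            (∀ i : I, IsPHP leW (· ≤ ·) (ρ i)) →
            (∀ (i j : I) (h : i ≤ j), ρ i = (f i j h).comp (ρ j)) →
            ∃! m : W →. L, IsPHP leW leL m ∧ ∀ i : I, ρ i = (π i).comp m) := by
  refine ⟨{C : Set (Set (Σ i : I, U i)) // HC f C},
    fun C C' => LeHC C.1 C'.1, ⟨?_, ?_, ?_, ?_⟩, piL f, ?_, ?_, ?_⟩
  · intro C; exact leHC_refl hf C.2
  · intro a b c h1 h2; exact leHC_trans hdir hf a.2 b.2 c.2 h1 h2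
  · intro a b h1 h2; exact Subtype.ext (leHC_antisymm hdir hf a.2 b.2 h1 h2)
  · intro a b c h1 h2; exact leHC_downtotal hdir hf a.2 b.2 c.2 h1 h2
  · intro i; exact ⟨piL_pcd hdir hf i, piL_hist hdir hf i⟩
  · intro i j h; exact piL_comp hdir hf i j h
  · intro W leW hW ρ hρ hρc
    exact ⟨mFun hρc hρ hW,
      ⟨mFun_php hdir hf hρc hρ hW, fun i => mFun_comp hdir hf hρc hρ hW i⟩,
      fun m' hm' => mFun_unique hdir hf hρc hρ hW m' hm'.1 hm'.2⟩
end

section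
/- Let Y = {(k,l) ∈ ℕ × ℕ | l ≤ k} ∪ {⊥} with ⊥ below everything and (k,l) ⪯ (k',l') iff k = k' and l ≤ l'. Let Y(n) = {(k,l) | l ≤ k < n} ∪ {⊥} with partial identity maps f_{n,m} : Y(m) → Y(n) defined exactly on Y(n) for n ≤ m. Then the projective limit of this inverse directed family is isomorphic to Y. -/
/-- The order on (ℕ × ℕ) ∪ {⊥}: ⊥ = none below everything and
(k,l) ⪯ (k',l') iff k = k' and l ≤ l'. -/
def XLe : Option (ℕ × ℕ) → Option (ℕ × ℕ) → Prop
  | none, _ => True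
  | some _, none => False
  | some (k, l), some (k', l') => k = k' ∧ l ≤ l'

/-- The prefix order Y = {(k,l) | l ≤ k} ∪ {⊥}. -/
def YT : Type := {x : Option (ℕ × ℕ) // x = none ∨ ∃ k l : ℕ, x = some (k, l) ∧ l ≤ k}

/-- The order on Y, induced from X. -/
def YLe (a b : YT) : Prop := XLe a.1 b.1

/-- The subset Y(n) = {(k,l) | l ≤ k < n} ∪ {⊥} of Y. -/
def YS (n : ℕ) : Set YT :=
  {y | y.1 = none ∨ ∃ k l : ℕ, y.1 = some (k, l) ∧ l ≤ k ∧ k < n}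

/-- The partial identity f_{n,m} : Y(m) → Y(n), defined exactly on Y(n). -/
def fmap (n m : ℕ) : ↥(YS m) →. ↥(YS n) :=
  fun y => ⟨y.1 ∈ YS n, fun h => ⟨y.1, h⟩⟩

/-- The partial identity projection Y → Y(n), defined exactly on Y(n). -/
def fproj (n : ℕ) : YT →. ↥(YS n) :=
  fun y => ⟨y ∈ YS n, fun h => ⟨y, h⟩⟩

-- AUX

lemma xle_refl (x : Option (ℕ × ℕ)) : XLe x x := by
  rcases x with _ | ⟨k, l⟩
  · trivial
  · exact ⟨rfl, le_refl l⟩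

lemma xle_trans {x y z : Option (ℕ × ℕ)} (h1 : XLe x y) (h2 : XLe y z) : XLe x z := by
  rcases x with _ | ⟨k, l⟩
  · trivial
  rcases y with _ | ⟨k', l'⟩
  · exact (show False from h1).elim
  rcases z with _ | ⟨k'', l''⟩
  · exact (show False from h2).elim
  have h1' : k = k' ∧ l ≤ l' := h1
  have h2' : k' = k'' ∧ l' ≤ l'' := h2
  exact ⟨h1'.1.trans h2'.1, h1'.2.trans h2'.2⟩

lemma xle_antisymm {x y : Option (ℕ × ℕ)} (h1 : XLe x y) (h2 : XLe y x) : x = y := by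
  rcases x with _ | ⟨k, l⟩
  · rcases y with _ | ⟨k', l'⟩
    · rfl
    · exact (show False from h2).elim
  rcases y with _ | ⟨k', l'⟩
  · exact (show False from h1).elim
  have h1' : k = k' ∧ l ≤ l' := h1
  have h2' : k' = k ∧ l' ≤ l := h2
  have hk : k = k' := h1'.1
  have hl : l = l' := le_antisymm h1'.2 h2'.2
  rw [hk, hl]

lemma xle_downTotal {x y z : Option (ℕ × ℕ)} (h1 : XLe x z) (h2 : XLe y z) :
    XLe x y ∨ XLe y x := by
  rcases x with _ | ⟨k, l⟩
  · exact Or.inl trivial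
  rcases y with _ | ⟨k', l'⟩
  · exact Or.inr trivial
  rcases z with _ | ⟨k'', l''⟩
  · exact (show False from h1).elim
  have h1' : k = k'' ∧ l ≤ l'' := h1
  have h2' : k' = k'' ∧ l' ≤ l'' := h2
  have hk : k = k' := h1'.1.trans h2'.1.symm
  rcases le_total l l' with h | h
  · exact Or.inl ⟨hk, h⟩
  · exact Or.inr ⟨hk.symm, h⟩

lemma yle_refl (a : YT) : YLe a a := xle_refl a.1

lemma yle_trans (a b c : YT) (h1 : YLe a b) (h2 : YLe b c) : YLe a c := xle_trans h1 h2

lemma yle_antisymm (a b : YT) (h1 : YLe a b) (h2 : YLe b a) : a = b :=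
  Subtype.ext (xle_antisymm h1 h2)

lemma yle_downTotal : DownTotal YLe := fun _ _ _ h1 h2 => xle_downTotal h1 h2

lemma YS_mono {n m : ℕ} (h : n ≤ m) : YS n ⊆ YS m := by
  rintro y (h1 | ⟨k, l, hk, hl, hn⟩)
  · exact Or.inl h1
  · exact Or.inr ⟨k, l, hk, hl, lt_of_lt_of_le hn h⟩

lemma YS_down {n : ℕ} {y z : YT} (hy : y ∈ YS n) (h : YLe z y) : z ∈ YS n := by
  have hy' : y.1 = none ∨ ∃ k l : ℕ, y.1 = some (k, l) ∧ l ≤ k ∧ k < n := hy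
  have h' : XLe z.1 y.1 := h
  show z.1 = none ∨ ∃ k l : ℕ, z.1 = some (k, l) ∧ l ≤ k ∧ k < n
  rcases hz : z.1 with _ | ⟨k, l⟩
  · exact Or.inl rfl
  rw [hz] at h'
  rcases hy' with h1 | ⟨k', l', hk, hl, hn⟩
  · rw [h1] at h'
    exact (show False from h').elim
  · rw [hk] at h'
    have h'' : k = k' ∧ l ≤ l' := h'
    obtain ⟨e, le⟩ := h''
    exact Or.inr ⟨k, l, rfl, by omega, by omega⟩

lemma exists_YS (y : YT) : ∃ n, y ∈ YS n := by
  obtain ⟨x, hx⟩ := y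
  rcases x with _ | ⟨k, l⟩
  · exact ⟨0, Or.inl rfl⟩
  · refine ⟨k + 1, Or.inr ⟨k, l, rfl, ?_, Nat.lt_succ_self k⟩⟩
    rcases hx with h | ⟨k', l', h, hl⟩
    · simp at h
    · simp only [Option.some.injEq, Prod.mk.injEq] at h
      omega

lemma mem_fmap {n m : ℕ} {y : ↥(YS m)} {z : ↥(YS n)} :
    z ∈ fmap n m y ↔ y.1 ∈ YS n ∧ z.1 = y.1 := by
  simp only [fmap, Part.mem_mk_iff]
  constructor
  · rintro ⟨h, rfl⟩; exact ⟨h, rfl⟩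
  · rintro ⟨h, hz⟩; exact ⟨h, Subtype.ext hz.symm⟩

lemma mem_fproj {n : ℕ} {y : YT} {z : ↥(YS n)} :
    z ∈ fproj n y ↔ y ∈ YS n ∧ z.1 = y := by
  simp only [fproj, Part.mem_mk_iff]
  constructor
  · rintro ⟨h, rfl⟩; exact ⟨h, rfl⟩
  · rintro ⟨h, hz⟩; exact ⟨h, Subtype.ext hz.symm⟩

lemma fmap_dom {n m : ℕ} (y : ↥(YS m)) : (fmap n m y).Dom ↔ y.1 ∈ YS n := Iff.rfl

lemma fproj_dom {n : ℕ} (y : YT) : (fproj n y).Dom ↔ y ∈ YS n := Iff.rfl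

noncomputable def ulim {W : Type} (ρ : ∀ n : ℕ, W →. ↥(YS n)) : W →. YT :=
  fun w => ⟨∃ n, (ρ n w).Dom, fun h => ((ρ h.choose w).get h.choose_spec).1⟩

lemma ulim_apply {W : Type} (ρ : ∀ n : ℕ, W →. ↥(YS n)) (w : W) :
    ulim ρ w = ⟨∃ n, (ρ n w).Dom, fun h => ((ρ h.choose w).get h.choose_spec).1⟩ := rfl

lemma mem_ulim {W : Type} (ρ : ∀ n : ℕ, W →. ↥(YS n))
    (hcons : ∀ (n m : ℕ) (w : W) (hn : (ρ n w).Dom) (hm : (ρ m w).Dom),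
      ((ρ n w).get hn).1 = ((ρ m w).get hm).1)
    (w : W) (y : YT) :
    y ∈ ulim ρ w ↔ ∃ (n : ℕ) (hn : (ρ n w).Dom), ((ρ n w).get hn).1 = y := by
  rw [ulim_apply, Part.mem_mk_iff]
  constructor
  · rintro ⟨h, rfl⟩
    exact ⟨h.choose, h.choose_spec, rfl⟩
  · rintro ⟨n, hn, rfl⟩
    exact ⟨⟨n, hn⟩, hcons _ n w _ hn⟩



/-- the partial identities f_{n,m} : Y(m) → Y(n) form an inverse directed
family of partial history preserving maps whose projective limit is (isomorphic to) Y: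
Y together with the partial identity projections is a projective limit of the family. -/
theorem stmt12 :
    -- Y is a prefix order
    IsPrefixOrder YLe ∧
    -- inverse directed family of partial history preserving maps
    (∀ n : ℕ, fmap n n = PFun.id ↥(YS n)) ∧
    (∀ n m p : ℕ, n ≤ m → m ≤ p → fmap n p = (fmap n m).comp (fmap m p)) ∧
    (∀ n m : ℕ, n ≤ m →
      IsPHP (fun a b : ↥(YS m) => YLe a.1 b.1) (fun a b : ↥(YS n) => YLe a.1 b.1)
        (fmap n m)) ∧
    -- the projections form a cone
    (∀ n m : ℕ, n ≤ m → fproj n = (fmap n m).comp (fproj m)) ∧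
    (∀ n : ℕ, IsPHP YLe (fun a b : ↥(YS n) => YLe a.1 b.1) (fproj n)) ∧
    -- and the cone is universal: Y is the projective limit
    (∀ (W : Type) (leW : W → W → Prop), IsPrefixOrder leW →
      ∀ ρ : ∀ n : ℕ, W →. ↥(YS n),
        (∀ n : ℕ, IsPHP leW (fun a b : ↥(YS n) => YLe a.1 b.1) (ρ n)) →
        (∀ (n m : ℕ) (h : n ≤ m), ρ n = (fmap n m).comp (ρ m)) →
        ∃! u : W →. YT, IsPHP leW YLe u ∧ ∀ n : ℕ, ρ n = (fproj n).comp u) := by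
  refine ⟨⟨yle_refl, yle_trans, yle_antisymm, yle_downTotal⟩, ?_, ?_, ?_, ?_, ?_, ?_⟩
  · -- fmap n n = PFun.id
    intro n
    funext y
    apply Part.ext
    intro z
    rw [mem_fmap, PFun.id_apply, Part.mem_some_iff]
    constructor
    · rintro ⟨-, hz⟩; exact Subtype.ext hz
    · rintro rfl; exact ⟨z.2, rfl⟩
  · -- composition
    intro n m p hnm hmp
    funext y
    apply Part.ext
    intro z
    rw [PFun.comp_apply, Part.mem_bind_iff (g := fmap n m)]
    simp only [mem_fmap]
    constructor
    · rintro ⟨hn, hz⟩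
      exact ⟨⟨y.1, YS_mono hnm hn⟩, ⟨YS_mono hnm hn, rfl⟩, hn, hz⟩
    · rintro ⟨a, ⟨-, ha⟩, hn, hz⟩
      rw [ha] at hn hz
      exact ⟨hn, hz⟩
  · -- IsPHP fmap
    intro n m hnm
    constructor
    · intro u v hu hv
      exact YS_down hu hv
    · intro u hu
      ext w
      simp only [PFun.mem_image, Set.mem_setOf_eq, mem_fmap]
      constructor
      · rintro ⟨v, hv, -, hw⟩
        have : YLe v.1 u.1 := hv
        rw [← hw] at this
        exact this
      · intro hw
        have hw' : YLe w.1 u.1 := hw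
        exact ⟨⟨w.1, YS_mono hnm w.2⟩, hw', w.2, rfl⟩
  · -- cone for fmap/fproj
    intro n m hnm
    funext y
    apply Part.ext
    intro z
    rw [PFun.comp_apply, Part.mem_bind_iff (g := fmap n m)]
    simp only [mem_fmap, mem_fproj]
    constructor
    · rintro ⟨hn, hz⟩
      exact ⟨⟨y, YS_mono hnm hn⟩, ⟨YS_mono hnm hn, rfl⟩, hn, hz⟩
    · rintro ⟨a, ⟨-, ha⟩, hn, hz⟩
      rw [ha] at hn hz
      exact ⟨hn, hz⟩
  · -- IsPHP fproj
    intro n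
    constructor
    · intro u v hu hv
      exact YS_down hu hv
    · intro u hu
      ext w
      simp only [PFun.mem_image, Set.mem_setOf_eq, mem_fproj]
      constructor
      · rintro ⟨v, hv, -, hw⟩
        have : YLe v u := hv
        rw [← hw] at this
        exact this
      · intro hw
        have hw' : YLe w.1 u := hw
        exact ⟨w.1, hw', w.2, rfl⟩
  · -- universal property
    intro W leW hW ρ hρ hcone
    have hmono : ∀ (n m : ℕ), n ≤ m → ∀ w : W, (ρ n w).Dom → (ρ m w).Dom := by
      intro n m h w hd
      rw [hcone n m h] at hd
      have hd' : ((ρ m w).bind (fmap n m)).Dom := hd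
      obtain ⟨z, hz⟩ := Part.dom_iff_mem.1 hd'
      obtain ⟨a, ha, -⟩ := Part.mem_bind_iff.1 hz
      exact Part.dom_iff_mem.2 ⟨a, ha⟩
    have hval : ∀ (n m : ℕ), n ≤ m → ∀ (w : W) (hn : (ρ n w).Dom) (hm : (ρ m w).Dom),
        ((ρ n w).get hn).1 = ((ρ m w).get hm).1 := by
      intro n m h w hn hm
      obtain ⟨z, hz⟩ := Part.dom_iff_mem.1 hn
      have hz' := hz
      rw [hcone n m h, PFun.comp_apply] at hz'
      obtain ⟨a, ha, hfa⟩ := Part.mem_bind_iff.1 hz'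
      rw [mem_fmap] at hfa
      rw [Part.get_eq_of_mem hz hn, Part.get_eq_of_mem ha hm, hfa.2]
    have hcons : ∀ (n m : ℕ) (w : W) (hn : (ρ n w).Dom) (hm : (ρ m w).Dom),
        ((ρ n w).get hn).1 = ((ρ m w).get hm).1 := by
      intro n m w hn hm
      rcases le_total n m with h | h
      · exact hval n m h w hn hm
      · exact (hval m n h w hm hn).symm
    refine ⟨ulim ρ, ⟨⟨?_, ?_⟩, ?_⟩, ?_⟩
    · -- PrefixClosedDom
      intro w v hw hv
      have hw' : ∃ n, (ρ n w).Dom := hw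
      obtain ⟨n, hn⟩ := hw'
      have hn' : w ∈ (ρ n).Dom := hn
      have hvd : v ∈ (ρ n).Dom := (hρ n).1 w v hn' hv
      show ∃ m, (ρ m v).Dom
      exact ⟨n, hvd⟩
    · -- HistPres
      intro w h
      have hD : (ulim ρ w).Dom := h
      ext y
      simp only [PFun.mem_image, Set.mem_setOf_eq]
      have hY0 := Part.get_mem hD
      rw [mem_ulim ρ hcons] at hY0
      obtain ⟨n₀, hn₀, hval0⟩ := hY0
      constructor
      · rintro ⟨v, hvw, hyv⟩
        rw [mem_ulim ρ hcons] at hyv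
        obtain ⟨m, hm, hym⟩ := hyv
        have hpw : (ρ (max n₀ m) w).Dom := hmono n₀ _ (le_max_left _ _) w hn₀
        have hpv : (ρ (max n₀ m) v).Dom := hmono m _ (le_max_right _ _) v hm
        have H := (hρ (max n₀ m)).2 w hpw
        have hin : (ρ (max n₀ m) v).get hpv ∈ (ρ (max n₀ m)).image {v' | leW v' w} := by
          rw [PFun.mem_image]
          exact ⟨v, hvw, Part.get_mem hpv⟩
        rw [H] at hin
        have hin' : YLe ((ρ (max n₀ m) v).get hpv).1 ((ρ (max n₀ m) w).get hpw).1 := hin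
        rw [hcons _ m v hpv hm, hym, hcons _ n₀ w hpw hn₀, hval0] at hin'
        exact hin'
      · intro hy
        have hy' : YLe y ((ulim ρ w).get hD) := hy
        rw [← hval0] at hy'
        have hyn : y ∈ YS n₀ := YS_down ((ρ n₀ w).get hn₀).2 hy'
        have hn₀' : w ∈ (ρ n₀).Dom := hn₀
        have H := (hρ n₀).2 w hn₀'
        have hmem : (⟨y, hyn⟩ : ↥(YS n₀)) ∈ (ρ n₀).image {v | leW v w} := by
          rw [H]
          exact hy'
        rw [PFun.mem_image] at hmem
        obtain ⟨v, hvw, hv⟩ := hmem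
        refine ⟨v, hvw, ?_⟩
        rw [mem_ulim ρ hcons]
        have hdv : (ρ n₀ v).Dom := Part.dom_iff_mem.2 ⟨_, hv⟩
        exact ⟨n₀, hdv, by rw [Part.get_eq_of_mem hv hdv]⟩
    · -- cone
      intro n
      funext w
      apply Part.ext
      intro z
      rw [PFun.comp_apply, Part.mem_bind_iff (g := fproj n)]
      constructor
      · intro hz
        have hn : (ρ n w).Dom := Part.dom_iff_mem.2 ⟨z, hz⟩
        have hzg : (ρ n w).get hn = z := Part.get_eq_of_mem hz hn
        refine ⟨z.1, ?_, mem_fproj.2 ⟨z.2, rfl⟩⟩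
        rw [mem_ulim ρ hcons]
        exact ⟨n, hn, by rw [hzg]⟩
      · rintro ⟨a, ha, hfa⟩
        rw [mem_ulim ρ hcons] at ha
        obtain ⟨m, hm, hma⟩ := ha
        rw [mem_fproj] at hfa
        obtain ⟨han, hza⟩ := hfa
        have hpw : (ρ (max n m) w).Dom := hmono m _ (le_max_right _ _) w hm
        rw [hcone n (max n m) (le_max_left _ _), PFun.comp_apply, Part.mem_bind_iff (g := fmap n (max n m))]
        refine ⟨(ρ (max n m) w).get hpw, Part.get_mem hpw, mem_fmap.2 ⟨?_, ?_⟩⟩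
        · rw [hcons _ m w hpw hm, hma]
          exact han
        · rw [hza, ← hma, ← hcons _ m w hpw hm]
    · -- uniqueness
      rintro u' ⟨-, hcone'⟩
      funext w
      apply Part.ext
      intro y
      constructor
      · intro hy
        obtain ⟨n, hyn⟩ := exists_YS y
        have hz : (⟨y, hyn⟩ : ↥(YS n)) ∈ ρ n w := by
          rw [hcone' n, PFun.comp_apply, Part.mem_bind_iff (g := fproj n)]
          exact ⟨y, hy, mem_fproj.2 ⟨hyn, rfl⟩⟩
        have hn : (ρ n w).Dom := Part.dom_iff_mem.2 ⟨_, hz⟩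
        rw [mem_ulim ρ hcons]
        exact ⟨n, hn, by rw [Part.get_eq_of_mem hz hn]⟩
      · intro hy
        rw [mem_ulim ρ hcons] at hy
        obtain ⟨n, hn, hyv⟩ := hy
        obtain ⟨z, hz⟩ := Part.dom_iff_mem.1 hn
        have hz' := hz
        rw [hcone' n, PFun.comp_apply, Part.mem_bind_iff (g := fproj n)] at hz'
        obtain ⟨a, ha, hfa⟩ := hz'
        rw [mem_fproj] at hfa
        have hyz : y = z.1 := by rw [← hyv, Part.get_eq_of_mem hz hn]
        rw [hyz, hfa.2]
        exact ha
end
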